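/- Let N ≥ 1, let a ≥ 0 be an integer, and let c : {1,…,N} → ℤ satisfy 0 ≤ cᵢ ≤ a for all i and Σᵢ cᵢ ≤ 3a. Then there exist subsets S₁, …, S_a of {1,…,N}, each of cardinality at most 3, such that for every i, cᵢ = #{t : i ∈ S_t}. (Equivalently: in L_N the class aH − Σᵢ cᵢEᵢ can be written as a sum of a classes, each of the form H, H − Eᵢ, H − Eᵢ − Eⱼ, or H − Eᵢ − Eⱼ − E_k with distinct indices. This decomposition claim is used repeatedly in the paper, e.g., in the proofs of Lemmas 3.4, 3.6 and 5.1, to show that such classes have nonnegative symplectic area in a reduced basis.) -/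

import Mathlib

/-- The decomposition claim used repeatedly in the paper (e.g. Lemmas 3.4, 3.6, 5.1):
if `a ≥ 0` and `c : {1,…,N} → ℤ` satisfies `0 ≤ cᵢ ≤ a` and `Σᵢ cᵢ ≤ 3a`, then there
are subsets `S₁, …, S_a` of `{1,…,N}`, each of size at most `3`, with
`cᵢ = #{t : i ∈ S_t}` for every `i`; equivalently the class `aH − Σᵢ cᵢEᵢ` in `L_N`
is a sum of `a` classes of the form `H`, `H − Eᵢ`, `H − Eᵢ − Eⱼ`, or
`H − Eᵢ − Eⱼ − E_k`. -/
theorem stmt9 (N : ℕ) (hN : 1 ≤ N) (a : ℕ) (c : Fin N → ℤ)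
    (hc0 : ∀ i, 0 ≤ c i) (hca : ∀ i, c i ≤ (a : ℤ))
    (hsum : (∑ i, c i) ≤ 3 * (a : ℤ)) :
    ∃ S : Fin a → Finset (Fin N), (∀ t, (S t).card ≤ 3) ∧
      ∀ i, c i = ((Finset.univ.filter (fun t => i ∈ S t)).card : ℤ) := by
  rcases Nat.eq_zero_or_pos a with ha | ha
  · subst ha
    refine ⟨fun t => ∅, fun t => by simp, fun i => ?_⟩
    have h1 := hc0 i
    have h2 := hca i
    simp only [Nat.cast_zero] at h2
    have : (Finset.univ.filter (fun t : Fin 0 => i ∈ (∅ : Finset (Fin N)))) = ∅ := by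
      simp
    rw [this]
    simp
    omega
  -- natural-number version of c
  set d : Fin N → ℕ := fun i => (c i).toNat with hd
  have hcd : ∀ i, c i = (d i : ℤ) := fun i => (Int.toNat_of_nonneg (hc0 i)).symm
  have hda : ∀ i, d i ≤ a := by
    intro i
    have h1 := hca i
    have h2 := hc0 i
    simp only [hd]
    omega
  have hT : (∑ i, d i) ≤ 3 * a := by
    have : (↑(∑ i, d i) : ℤ) ≤ 3 * (a : ℤ) := by
      push_cast
      calc (∑ i, (d i : ℤ)) = ∑ i, c i := by
            refine Finset.sum_congr rfl fun i _ => (hcd i).symm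
        _ ≤ 3 * (a : ℤ) := hsum
    exact_mod_cast this
  -- prefix sums
  set P : Fin N → ℕ := fun i => ∑ j ∈ Finset.univ.filter (fun j => j < i), d j with hP
  set I : Fin N → Finset ℕ := fun i => Finset.Ico (P i) (P i + d i) with hI
  -- monotonicity: the intervals are consecutive / disjoint
  have hmono : ∀ i j : Fin N, i < j → P i + d i ≤ P j := by
    intro i j hij
    have hsub : insert i (Finset.univ.filter (fun k => k < i)) ⊆
        Finset.univ.filter (fun k => k < j) := by
      intro k hk
      simp only [Finset.mem_insert, Finset.mem_filter, Finset.mem_univ, true_and] at *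
      rcases hk with rfl | hk
      · exact hij
      · exact lt_trans hk hij
    have hnot : i ∉ Finset.univ.filter (fun k => k < i) := by simp
    calc P i + d i = ∑ k ∈ insert i (Finset.univ.filter (fun k => k < i)), d k := by
          rw [Finset.sum_insert hnot]; ring
      _ ≤ ∑ k ∈ Finset.univ.filter (fun k => k < j), d k :=
          Finset.sum_le_sum_of_subset hsub
      _ = P j := rfl
  have hbound : ∀ i : Fin N, P i + d i ≤ ∑ k, d k := by
    intro i
    have hnot : i ∉ Finset.univ.filter (fun k => k < i) := by simp
    calc P i + d i = ∑ k ∈ insert i (Finset.univ.filter (fun k => k < i)), d k := by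
          rw [Finset.sum_insert hnot]; ring
      _ ≤ ∑ k, d k := Finset.sum_le_sum_of_subset (Finset.subset_univ _)
  have hdisj : ∀ i j : Fin N, i ≠ j → ∀ k, k ∈ I i → k ∈ I j → False := by
    intro i j hij k hki hkj
    simp only [hI, Finset.mem_Ico] at hki hkj
    rcases lt_trichotomy i j with h | h | h
    · have := hmono i j h; omega
    · exact hij h
    · have := hmono j i h; omega
  refine ⟨fun t => Finset.univ.filter (fun i => ∃ k ∈ I i, k % a = (t : ℕ)), ?_, ?_⟩
  · -- card bound
    intro t
    classical
    set f : Fin N → ℕ := fun i =>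
      if h : ∃ k, k ∈ I i ∧ k % a = (t : ℕ) then h.choose else 0 with hf
    have key : ∀ i ∈ Finset.univ.filter (fun i => ∃ k ∈ I i, k % a = (t : ℕ)),
        f i ∈ I i ∧ f i % a = (t : ℕ) := by
      intro i hi
      simp only [Finset.mem_filter, Finset.mem_univ, true_and] at hi
      obtain ⟨k, hk1, hk2⟩ := hi
      have h : ∃ k, k ∈ I i ∧ k % a = (t : ℕ) := ⟨k, hk1, hk2⟩
      simp only [hf, dif_pos h]
      exact h.choose_spec
    calc (Finset.univ.filter (fun i => ∃ k ∈ I i, k % a = (t : ℕ))).card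
        ≤ (Finset.range 3).card := by
          apply Finset.card_le_card_of_injOn (fun i => f i / a)
          · intro i hi
            obtain ⟨h1, h2⟩ := key i hi
            simp only [hI, Finset.mem_Ico] at h1
            have hfi : f i < 3 * a := lt_of_lt_of_le h1.2 (le_trans (hbound i) hT)
            simp only [Finset.mem_coe, Finset.mem_range]
            exact (Nat.div_lt_iff_lt_mul ha).mpr hfi
          · intro x hx y hy hxy
            have hx' := key x (Finset.mem_coe.mp hx)
            have hy' := key y (Finset.mem_coe.mp hy)
            have hxy' : f x / a = f y / a := hxy
            by_contra hne
            have hfeq : f x = f y := by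
              calc f x = a * (f x / a) + f x % a := (Nat.div_add_mod _ _).symm
                _ = a * (f y / a) + f y % a := by rw [hxy', hx'.2, hy'.2]
                _ = f y := Nat.div_add_mod _ _
            exact hdisj x y hne (f x) hx'.1 (hfeq ▸ hy'.1)
      _ = 3 := Finset.card_range 3
  · -- exact count
    intro i
    rw [hcd i]
    congr 1
    set g : ℕ → Fin a := fun k => ⟨k % a, Nat.mod_lt _ ha⟩ with hg
    have himg : (Finset.univ.filter (fun t : Fin a => i ∈
        (fun t : Fin a => Finset.univ.filter (fun i => ∃ k ∈ I i, k % a = (t : ℕ))) t))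
        = (I i).image g := by
      ext t
      simp only [Finset.mem_filter, Finset.mem_univ, true_and, Finset.mem_image, hg]
      constructor
      · rintro ⟨k, hk1, hk2⟩
        exact ⟨k, hk1, Fin.ext hk2⟩
      · rintro ⟨k, hk1, hk2⟩
        exact ⟨k, hk1, by rw [← hk2]⟩
    rw [himg]
    have hinj : Set.InjOn g (I i) := by
      intro k hk k' hk' hkk
      simp only [hI, Finset.mem_coe, Finset.mem_Ico] at hk hk'
      have hm : k % a = k' % a := by
        have : (g k).val = (g k').val := congrArg Fin.val hkk
        simpa [hg] using this
      have hd' : d i ≤ a := hda i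
      rcases le_total k k' with h | h
      · have hdvd : a ∣ k' - k := (Nat.modEq_iff_dvd' h).mp hm
        have hlt : k' - k < a := by omega
        have := Nat.eq_zero_of_dvd_of_lt hdvd hlt
        omega
      · have hdvd : a ∣ k - k' := (Nat.modEq_iff_dvd' h).mp hm.symm
        have hlt : k - k' < a := by omega
        have := Nat.eq_zero_of_dvd_of_lt hdvd hlt
        omega
    rw [Finset.card_image_of_injOn hinj]
    simp [hI]
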